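/- Let G=(V,E) be a DAG, let u,v,x be distinct vertices, and let W ⊆ V∖{u,v,x}. If u and v are d-separated given W in G but d-connected given W∪{x} in G, then x ̸⇝ u, x ̸⇝ v, and x ̸⇝ w for every w ∈ W; that is, for every DAG G' Markov equivalent to G, x is not an ancestor in G' of u, of v, or of any element of W. -/

import Mathlib

/-! Basic graphical-model definitions: DAGs as binary relations on a finite
vertex type, d-separation via paths (lists of vertices), Markov equivalence,
and definite (non-)ancestral relations. -/

variable {V : Type*}

/-- Two nodes are adjacent in the digraph `E` if there is an edge between them
in either direction. -/
def Adjacent (E : V → V → Prop) (a b : V) : Prop := E a b ∨ E b a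

/-- A digraph is acyclic if it has no directed cycles. -/
def Acyclic (E : V → V → Prop) : Prop := ∀ v : V, ¬ Relation.TransGen E v v

/-- `u` is an ancestor of `v`: there is a directed path from `u` to `v`
(by convention, `v` is an ancestor of itself). -/
def Anc (E : V → V → Prop) (u v : V) : Prop := Relation.ReflTransGen E u v

/-- A list of vertices is a path in the skeleton of `E`: consecutive vertices
are adjacent and no vertex repeats. -/
def IsPath (E : V → V → Prop) (p : List V) : Prop :=
  p.Nodup ∧ List.Chain' (Adjacent E) p

/-- A path `p` is d-connecting given the conditioning set `C` if every collider
on it is an ancestor of an element of `C` and every non-collider on it is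
outside `C`.  Interior vertices of `p` are exactly the middle elements `x` of
consecutive triples `[a, x, b]` of `p`; such an `x` is a collider when both
incident edges point into it. -/
def IsDConnectingPath (E : V → V → Prop) (C : Set V) (p : List V) : Prop :=
  ∀ a x b : V, [a, x, b] <:+: p →
    ((E a x ∧ E b x) → ∃ c ∈ C, Anc E x c) ∧ (¬ (E a x ∧ E b x) → x ∉ C)

/-- `u` and `v` are d-connected given `C` in `E`. -/
def DConn (E : V → V → Prop) (C : Set V) (u v : V) : Prop :=
  ∃ p : List V, IsPath E p ∧ p.head? = some u ∧ p.getLast? = some v ∧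
    IsDConnectingPath E C p

/-- `u` and `v` are d-separated given `C` in `E`. -/
def DSep (E : V → V → Prop) (C : Set V) (u v : V) : Prop := ¬ DConn E C u v

/-- Two DAGs on the same vertex set are Markov equivalent if they have exactly
the same d-separation relations. -/
def MarkovEquiv (E E' : V → V → Prop) : Prop :=
  ∀ (u v : V) (C : Set V), u ≠ v → u ∉ C → v ∉ C → (DSep E C u v ↔ DSep E' C u v)

/-- `u` is definite ancestral to `v` (`u ⇝ v`): `u` is an ancestor of `v` in
every DAG Markov equivalent to `E`. -/
def DefAnc (E : V → V → Prop) (u v : V) : Prop :=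
  ∀ E' : V → V → Prop, Acyclic E' → MarkovEquiv E E' → Anc E' u v

/-- `u` is definite non-ancestral to `v` (`u ̸⇝ v`): `u` is not an ancestor of
`v` in any DAG Markov equivalent to `E`. -/
def DefNonAnc (E : V → V → Prop) (u v : V) : Prop :=
  ∀ E' : V → V → Prop, Acyclic E' → MarkovEquiv E E' → ¬ Anc E' u v

/-- The CPDAG of `E` has a directed edge `a → b` iff `a` and `b` are adjacent
and the edge is oriented `a → b` in every member of the Markov equivalence
class of `E`. -/
def CPDAGDir (E : V → V → Prop) (a b : V) : Prop :=
  Adjacent E a b ∧ ∀ E' : V → V → Prop, Acyclic E' → MarkovEquiv E E' → E' a b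

/-- A possibly directed path in the CPDAG of `E`: a path in the skeleton such
that no edge on it is directed backwards (as `x_{i+1} → x_i`) in the CPDAG. -/
def IsPossiblyDirectedPath (E : V → V → Prop) (p : List V) : Prop :=
  p.Nodup ∧ List.Chain' (fun a b => Adjacent E a b ∧ ¬ CPDAGDir E b a) p

/-- A path is unshielded if no three consecutive vertices on it are pairwise
adjacent. -/
def UnshieldedPath (E : V → V → Prop) (p : List V) : Prop :=
  ∀ a x b : V, [a, x, b] <:+: p → ¬ Adjacent E a b


section Helpers

open List Relation

variable {V : Type*}

/-- Any `E`-chain in an acyclic digraph has no duplicate vertices. -/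
lemma chain'_nodup_of_acyclic {E : V → V → Prop} (hE : Acyclic E) {r : List V}
    (h : List.Chain' E r) : r.Nodup := by
  haveI : IsTrans V (Relation.TransGen E) := ⟨fun _ _ _ => Relation.TransGen.trans⟩
  have h1 : List.Chain' (Relation.TransGen E) r := h.imp (fun _ _ hab => Relation.TransGen.single hab)
  refine (List.isChain_iff_pairwise.mp h1).imp ?_
  intro a b hab heq
  exact hE b (heq ▸ hab)

/-- From reflexive-transitive closure produce an explicit chain list. -/
lemma exists_chain_of_anc {E : V → V → Prop} {c u : V} (h : Anc E c u) :
    ∃ r : List V, r.head? = some c ∧ r.getLast? = some u ∧ List.Chain' E r ∧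
      ∀ z ∈ r, Anc E c z := by
  induction h with
  | refl =>
      refine ⟨[c], rfl, rfl, List.isChain_singleton _, ?_⟩
      intro z hz
      simp only [List.mem_singleton] at hz
      subst hz
      exact Relation.ReflTransGen.refl
  | @tail b u' hcb hbu ih =>
      obtain ⟨r, h1, h2, h3, h4⟩ := ih
      have hrne : r ≠ [] := by rintro rfl; simp at h1
      refine ⟨r ++ [u'], ?_, ?_, ?_, ?_⟩
      · rwa [List.head?_append_of_ne_nil r hrne]
      · exact List.getLast?_concat
      · refine List.isChain_append.mpr ⟨h3, List.isChain_singleton _, ?_⟩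
        intro a ha y hy
        simp only [List.head?_cons, Option.mem_some_iff] at hy
        rw [h2, Option.mem_some_iff] at ha
        subst ha; subst hy; exact hbu
      · intro z hz
        rcases List.mem_append.mp hz with hz | hz
        · exact h4 z hz
        · simp only [List.mem_singleton] at hz
          subst hz; exact hcb.tail hbu

lemma getLast?_of_suffix {l₁ l₂ : List V} (h : l₁ <:+ l₂) (hne : l₁ ≠ []) :
    l₂.getLast? = l₁.getLast? := by
  obtain ⟨s, rfl⟩ := h
  rw [List.getLast?_append]
  cases h' : l₁.getLast? with
  | none => exact absurd (List.getLast?_eq_none_iff.mp h') hne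
  | some w => rfl

/-- Pick the last element of `r` that belongs to (list) `S`. -/
lemma exists_last_mem {r S : List V} (h : ∃ z ∈ r, z ∈ S) :
    ∃ y t, (y :: t) <:+ r ∧ y ∈ S ∧ ∀ z ∈ t, z ∉ S := by
  classical
  induction r with
  | nil => simp at h
  | cons a r ih =>
    by_cases h' : ∃ z ∈ r, z ∈ S
    · obtain ⟨y, t, hsuf, hy, ht⟩ := ih h'
      exact ⟨y, t, hsuf.trans (List.suffix_cons a r), hy, ht⟩
    · push_neg at h'
      obtain ⟨z, hz, hzS⟩ := h
      rcases List.mem_cons.mp hz with rfl | hz'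
      · exact ⟨z, r, List.suffix_refl _, hzS, h'⟩
      · exact absurd hzS (h' z hz')

/-- Classify the position of a 3-element infix in an append. -/
lemma triple_infix_append {l₁ l₂ : List V} {a z b : V}
    (h : [a, z, b] <:+: l₁ ++ l₂) :
    [a, z, b] <:+: l₁ ∨ [a, z, b] <:+: l₂ ∨
    ([a, z] <:+ l₁ ∧ ∃ l₂', l₂ = b :: l₂') ∨
    ([a] <:+ l₁ ∧ ∃ l₂', l₂ = z :: b :: l₂') := by
  induction l₁ with
  | nil => exact Or.inr (Or.inl (by simpa using h))
  | cons hd l₁ ih =>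
    rw [List.cons_append] at h
    rcases List.infix_cons_iff.mp h with hpre | hinf
    · obtain ⟨t, ht⟩ := hpre
      simp only [List.cons_append, List.cons.injEq] at ht
      obtain ⟨rfl, ht⟩ := ht
      match l₁, ht with
      | [], ht =>
          refine Or.inr (Or.inr (Or.inr ⟨List.suffix_refl _, t, ?_⟩))
          simpa using ht.symm
      | [w], ht =>
          simp only [List.cons_append, List.nil_append, List.cons.injEq] at ht
          obtain ⟨rfl, ht⟩ := ht
          exact Or.inr (Or.inr (Or.inl ⟨List.suffix_refl _, t, ht.symm⟩))
      | w :: w' :: l₁', ht =>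
          simp only [List.cons_append, List.cons.injEq] at ht
          obtain ⟨rfl, rfl, ht⟩ := ht
          exact Or.inl ⟨[], l₁', by simp⟩
    · rcases ih hinf with h1 | h2 | ⟨h3, h3'⟩ | ⟨h4, h4'⟩
      · exact Or.inl (h1.trans (List.infix_cons_iff.mpr (Or.inr (List.infix_refl _))))
      · exact Or.inr (Or.inl h2)
      · exact Or.inr (Or.inr (Or.inl ⟨h3.trans (List.suffix_cons hd l₁), h3'⟩))
      · exact Or.inr (Or.inr (Or.inr ⟨h4.trans (List.suffix_cons hd l₁), h4'⟩))

lemma triple_infix_reverse {l : List V} {a z b : V} (h : [a, z, b] <:+: l.reverse) :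
    [b, z, a] <:+: l := by
  exact List.reverse_infix.mp (by simpa using h)

/-- d-connection is symmetric (reverse the path). -/
lemma DConn.symm' {E : V → V → Prop} {C : Set V} {u v : V} (h : DConn E C u v) :
    DConn E C v u := by
  obtain ⟨p, ⟨hnd, hch⟩, hh, hl, hdc⟩ := h
  refine ⟨p.reverse, ⟨(List.nodup_reverse.mpr hnd), ?_⟩, ?_, ?_, ?_⟩
  · apply List.isChain_reverse.mpr
    exact hch.imp (fun _ _ hab => hab.symm)
  · rw [List.head?_reverse]; exact hl
  · rw [List.getLast?_reverse]; exact hh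
  · intro a z b htr
    have h2 := hdc b z a (triple_infix_reverse htr)
    exact ⟨fun hc => h2.1 ⟨hc.2, hc.1⟩, fun hn => h2.2 (fun hc => hn ⟨hc.2, hc.1⟩)⟩

/-- Easy case: if `x` is an ancestor of some `w ∈ W`, the `W ∪ {x}`-connecting
path already connects given `W`. -/
lemma key_W {E : V → V → Prop} {u v x w : V} {W : Set V} (hw : w ∈ W)
    (hanc : Anc E x w) (hsep : DSep E W u v) (hconn : DConn E (W ∪ {x}) u v) : False := by
  obtain ⟨p, hp, hh, hl, hdc⟩ := hconn
  refine hsep ⟨p, hp, hh, hl, fun a z b htr => ?_⟩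
  obtain ⟨h1, h2⟩ := hdc a z b htr
  refine ⟨fun hc => ?_, fun hn hzW => h2 hn (Or.inl hzW)⟩
  obtain ⟨c', hc', hzc⟩ := h1 hc
  rcases hc' with hc' | hc'
  · exact ⟨c', hc', hzc⟩
  · rw [Set.mem_singleton_iff] at hc'
    subst hc'
    exact ⟨w, hw, hzc.trans hanc⟩

/-- Main case: if `u,v` are d-separated given `W` and d-connected given
`W ∪ {x}`, then `x` is not an ancestor of `u`. -/
lemma key_main {E : V → V → Prop} (hE : Acyclic E) {u v x : V} {W : Set V}
    (hsep : DSep E W u v) (hconn : DConn E (W ∪ {x}) u v) (hxu : Anc E x u) : False := by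
  classical
  obtain ⟨p, ⟨hnd, hch⟩, hh, hl, hdc⟩ := hconn
  have hblock : ¬ IsDConnectingPath E W p := fun h => hsep ⟨p, ⟨hnd, hch⟩, hh, hl, h⟩
  -- there is a "bad collider": a collider which is an ancestor of x but not of W
  have hBad : ∃ n : ℕ, ∃ a z b s t, p = s ++ [a, z, b] ++ t ∧ t.length = n ∧
      E a z ∧ E b z ∧ ¬ ∃ w ∈ W, Anc E z w := by
    rw [IsDConnectingPath] at hblock
    push_neg at hblock
    obtain ⟨a, z, b, htr, hfail⟩ := hblock
    obtain ⟨h1, h2⟩ := hdc a z b htr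
    by_cases hcol : E a z ∧ E b z
    · have hnW : ¬ ∃ w ∈ W, Anc E z w := by
        intro hex
        exact (hfail (fun _ => hex)).1 hcol.1 hcol.2
      obtain ⟨s, t, hst⟩ := htr
      exact ⟨t.length, a, z, b, s, t, hst.symm, rfl, hcol.1, hcol.2, hnW⟩
    · exfalso
      exact h2 hcol (Or.inl (hfail (fun hc => absurd hc hcol)).2)
  set n := Nat.find hBad with hn
  obtain ⟨a, c, b, s, t, hp, htlen, hac, hbc, hcW⟩ := Nat.find_spec hBad
  have htrip : [a, c, b] <:+: p := ⟨s, t, hp.symm⟩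
  obtain ⟨c', hc', hcc'⟩ := (hdc a c b htrip).1 ⟨hac, hbc⟩
  have hcx : Anc E c x := by
    rcases hc' with h | h
    · exact absurd ⟨c', h, hcc'⟩ hcW
    · rwa [Set.mem_singleton_iff.mp h] at hcc'
  have hcu : Anc E c u := hcx.trans hxu
  -- directed path r from c to u
  obtain ⟨r, hrh, hrl, hrch, hranc⟩ := exists_chain_of_anc hcu
  have hrnd : r.Nodup := chain'_nodup_of_acyclic hE hrch
  have hrW : ∀ z ∈ r, z ∉ W := fun z hz hzW => hcW ⟨z, hzW, hranc z hz⟩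
  -- segment of p from c to v
  set seg : List V := c :: b :: t with hsegdef
  have hpseg : p = (s ++ [a]) ++ seg := by rw [hp]; simp [hsegdef]
  have hsegsuf : seg <:+ p := ⟨s ++ [a], hpseg.symm⟩
  have hsegnd : seg.Nodup := hnd.sublist hsegsuf.sublist
  have hpnodup := hpseg ▸ hnd
  have hdisj : (s ++ [a]).Disjoint seg :=
    fun z hz1 hz2 => (List.nodup_append.mp hpnodup).2.2 z hz1 z hz2 rfl
  have huseg : u ∉ seg := by
    have : p.head? = (s ++ [a]).head? := by
      rw [hpseg]; exact List.head?_append_of_ne_nil _ (by simp)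
    have humem : u ∈ s ++ [a] := List.mem_of_mem_head? (by rw [← this, hh]; rfl)
    exact fun h => hdisj humem h
  -- y : last vertex of r that lies on seg
  have hcr : c ∈ r := List.mem_of_mem_head? (by rw [hrh]; rfl)
  obtain ⟨y, t₂, hsuf, hyseg, ht₂⟩ :=
    exists_last_mem ⟨c, hcr, show c ∈ seg by simp [hsegdef]⟩
  have hyr : y ∈ r := hsuf.subset (List.mem_cons_self)
  have hylast : (y :: t₂).getLast? = some u := by
    rw [← getLast?_of_suffix hsuf (by simp)]; exact hrl
  have ht₂ne : t₂ ≠ [] := by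
    rintro rfl
    simp only [List.getLast?_singleton, Option.some.injEq] at hylast
    exact huseg (hylast ▸ hyseg)
  -- split seg at y
  obtain ⟨seg₁, seg₂, hsegsplit⟩ := List.append_of_mem hyseg
  have hysuf : (y :: seg₂) <:+ seg := ⟨seg₁, hsegsplit.symm⟩
  -- the new path
  set P : List V := (y :: t₂).reverse ++ seg₂ with hPdef
  have hPh : P.head? = some u := by
    rw [hPdef, List.head?_append_of_ne_nil _ (by simp), List.head?_reverse]
    exact hylast
  have hPl : P.getLast? = some v := by
    have h1 : P.getLast? = (y :: seg₂).getLast? := by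
      rw [hPdef, List.reverse_cons, List.append_assoc, List.singleton_append]
      exact getLast?_of_suffix ⟨t₂.reverse, rfl⟩ (by simp)
    have h2 : seg.getLast? = (y :: seg₂).getLast? := getLast?_of_suffix hysuf (by simp)
    have h3 : seg.getLast? = some v := by
      rw [getLast?_of_suffix hsegsuf (by simp [hsegdef]) ] at hl
      exact hl
    rw [h1, ← h2, h3]
  have hyt₂nd : (y :: t₂).Nodup := hrnd.sublist hsuf.sublist
  have hyseg₂nd : (y :: seg₂).Nodup := hsegnd.sublist hysuf.sublist
  have hyseg₂sub : ∀ z ∈ y :: seg₂, z ∈ seg := fun z hz => hysuf.subset hz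
  have hPnd : P.Nodup := by
    rw [hPdef, List.nodup_append]
    refine ⟨(List.nodup_reverse.mpr hyt₂nd), (List.nodup_cons.mp hyseg₂nd).2, ?_⟩
    intro z hz w hzseg₂ hzw
    subst hzw
    have hz' : z ∈ y :: t₂ := List.mem_reverse.mp hz
    have hzseg : z ∈ seg := hyseg₂sub z (List.mem_cons_of_mem y hzseg₂)
    rcases List.mem_cons.mp hz' with rfl | hz''
    · exact (List.nodup_cons.mp hyseg₂nd).1 hzseg₂
    · exact ht₂ z hz'' hzseg
  have hyt₂ch : List.Chain' E (y :: t₂) := hrch.suffix hsuf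
  have hsegch : List.Chain' (Adjacent E) seg := hch.suffix hsegsuf
  have hyseg₂ch : List.Chain' (Adjacent E) (y :: seg₂) := hsegch.suffix hysuf
  have hPch : List.Chain' (Adjacent E) P := by
    rw [hPdef]
    refine List.isChain_append.mpr ⟨?_, (List.isChain_cons.mp hyseg₂ch).2, ?_⟩
    · apply List.isChain_reverse.mpr
      refine hyt₂ch.imp ?_
      intro a' b' hab
      exact (Or.inr hab : Adjacent E b' a')
    · intro z hz w hw
      rw [List.getLast?_reverse] at hz
      simp only [List.head?_cons, Option.mem_some_iff] at hz
      subst hz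
      exact (List.isChain_cons.mp hyseg₂ch).1 w hw
  -- triples of p lying in y :: seg₂ behave well given W
  have hsub : ∀ α z β : V, [α, z, β] <:+: y :: seg₂ →
      ((E α z ∧ E β z → ∃ w ∈ W, Anc E z w) ∧ (¬ (E α z ∧ E β z) → z ∉ W)) := by
    intro α z β htr'
    have htrseg : [α, z, β] <:+: seg := htr'.trans hysuf.isInfix
    have htrp : [α, z, β] <:+: p := htrseg.trans hsegsuf.isInfix
    obtain ⟨h1, h2⟩ := hdc α z β htrp
    refine ⟨fun hcol => ?_, fun hn hzW => h2 hn (Or.inl hzW)⟩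
    obtain ⟨c', hc', hzc⟩ := h1 hcol
    rcases hc' with h | h
    · exact ⟨c', h, hzc⟩
    · by_contra hnex
      obtain ⟨s₂, t₂', hseq⟩ := htrseg
      have hlen : t₂'.length < t.length := by
        have := congrArg List.length hseq
        simp [hsegdef] at this
        omega
      have hbad' : ∃ a' z' b' s' t', p = s' ++ [a', z', b'] ++ t' ∧
          t'.length = t₂'.length ∧ E a' z' ∧ E b' z' ∧ ¬ ∃ w ∈ W, Anc E z' w :=
        ⟨α, z, β, (s ++ [a]) ++ s₂, t₂', by rw [hpseg, ← hseq]; simp [List.append_assoc], rfl,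
          hcol.1, hcol.2, hnex⟩
      exact Nat.find_min hBad (htlen ▸ hlen) hbad'
  -- P is d-connecting given W
  have hPdc : IsDConnectingPath E W P := by
    intro α z β htr
    rcases triple_infix_append (htr.trans (by rw [hPdef])) with
      h1 | h2 | ⟨h3, l₂', h3'⟩ | ⟨h4, l₂', h4'⟩
    · -- inside the reversed directed part
      have hrev : [β, z, α] <:+: y :: t₂ := triple_infix_reverse h1
      have hzr : z ∈ r := hsuf.subset (hrev.subset (by simp))
      have hchain : List.Chain' E [β, z, α] := hyt₂ch.infix hrev
      have hβz : E β z := (List.isChain_cons_cons.mp hchain).1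
      have hzα : E z α := (List.isChain_cons_cons.mp (List.isChain_cons_cons.mp hchain).2).1
      refine ⟨fun hcol => ?_, fun _ => hrW z hzr⟩
      exact absurd ((Relation.TransGen.single hzα).tail hcol.1) (hE z)
    · -- inside seg₂
      exact hsub α z β (h2.trans ((List.suffix_cons y seg₂).isInfix))
    · -- junction: z is the last vertex of the directed part, i.e. z appears
      -- as [α, z] suffix of (y :: t₂).reverse : so z = y, α = head of t₂
      have hpref : [z, α] <+: y :: t₂ := by
        rw [← List.reverse_suffix]; simpa using h3
      obtain ⟨rest, hrest⟩ := hpref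
      simp only [List.cons_append, List.cons.injEq] at hrest
      obtain ⟨hzy, hrest⟩ := hrest
      have hzα : E z α := by
        have hc := hyt₂ch
        rw [← hzy, ← hrest] at hc
        exact (List.isChain_cons_cons.mp hc).1
      refine ⟨fun hcol => ?_, fun _ => hrW z (hzy ▸ hyr)⟩
      exact absurd ((Relation.TransGen.single hzα).tail hcol.1) (hE z)
    · -- junction with α = y
      have hαy : α = y := by
        have hpref : [α] <+: y :: t₂ := by
          rw [← List.reverse_suffix]; simpa using h4
        obtain ⟨rest, hrest⟩ := hpref
        simp only [List.cons_append, List.nil_append, List.cons.injEq] at hrest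
        exact hrest.1
      exact hsub α z β (by rw [hαy, h4']; exact ⟨[], l₂', by simp⟩)
  exact hsep ⟨P, ⟨hPnd, hPch⟩, hPh, hPl, hPdc⟩

end Helpers

/-- Lemma 2, second bullet: if `u, v` are d-separated given
`W` but d-connected given `W ∪ {x}`, then `x ̸⇝ u`, `x ̸⇝ v` and `x ̸⇝ W`. -/
theorem stmt3 [Fintype V] (E : V → V → Prop) (hE : Acyclic E) (u v x : V) (W : Set V)
    (huv : u ≠ v) (hux : u ≠ x) (hvx : v ≠ x)
    (hWu : u ∉ W) (hWv : v ∉ W) (hWx : x ∉ W)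
    (hsep : DSep E W u v) (hconn : DConn E (W ∪ {x}) u v) :
    DefNonAnc E x u ∧ DefNonAnc E x v ∧ ∀ w ∈ W, DefNonAnc E x w := by
  have hconn' : ¬ DSep E (W ∪ {x}) u v := fun hd => hd hconn
  have hmemu : u ∉ W ∪ {x} := fun h => h.elim hWu (fun h => hux (Set.mem_singleton_iff.mp h))
  have hmemv : v ∉ W ∪ {x} := fun h => h.elim hWv (fun h => hvx (Set.mem_singleton_iff.mp h))
  have transfer : ∀ E' : V → V → Prop, Acyclic E' → MarkovEquiv E E' →
      DSep E' W u v ∧ DConn E' (W ∪ {x}) u v := by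
    intro E' hE' hme
    refine ⟨(hme u v W huv hWu hWv).mp hsep, ?_⟩
    have h := (hme u v (W ∪ {x}) huv hmemu hmemv).not.mp hconn'
    exact not_not.mp h
  refine ⟨?_, ?_, ?_⟩
  · intro E' hE' hme hanc
    obtain ⟨hsep', hconn''⟩ := transfer E' hE' hme
    exact key_main hE' hsep' hconn'' hanc
  · intro E' hE' hme hanc
    obtain ⟨hsep', hconn''⟩ := transfer E' hE' hme
    have hsep'' : DSep E' W v u := fun h => hsep' h.symm'
    exact key_main hE' hsep'' hconn''.symm' hanc
  · intro w hw E' hE' hme hanc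
    obtain ⟨hsep', hconn''⟩ := transfer E' hE' hme
    exact key_W hw hanc hsep' hconn''
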